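/- For a prime p and natural numbers n₁, n₂ with n₁, n₂ ≥ 1, the equality t^{n₁} + 1 = (t+1)^{n₂} holds in the polynomial ring F_p[t] if and only if n₁ = n₂ and n₁ is a power of p. -/

import Mathlib

/-- In `𝔽_p[t]`, for `n₁, n₂ ≥ 1`, we have `t^{n₁} + 1 = (t+1)^{n₂}` iff
`n₁ = n₂` and `n₁` is a power of `p`. -/
theorem pow_add_one_eq_add_one_pow_iff (p : ℕ) (hp : p.Prime) (n₁ n₂ : ℕ)
    (h₁ : 1 ≤ n₁) (h₂ : 1 ≤ n₂) :
    (Polynomial.X ^ n₁ + 1 : Polynomial (ZMod p)) = (Polynomial.X + 1) ^ n₂ ↔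
      n₁ = n₂ ∧ ∃ k : ℕ, n₁ = p ^ k := by
  haveI : Fact p.Prime := ⟨hp⟩
  open Polynomial in
  constructor
  · intro h
    -- degrees give n₁ = n₂
    have hdegL : (Polynomial.X ^ n₁ + 1 : Polynomial (ZMod p)).natDegree = n₁ := by
      rw [show (1 : Polynomial (ZMod p)) = Polynomial.C 1 by simp,
        Polynomial.natDegree_X_pow_add_C]
    have hdegR : ((Polynomial.X + 1 : Polynomial (ZMod p)) ^ n₂).natDegree = n₂ := by
      have : (Polynomial.X + 1 : Polynomial (ZMod p)) = Polynomial.X + Polynomial.C 1 := by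
        simp
      rw [this, Polynomial.natDegree_pow, Polynomial.natDegree_X_add_C, mul_one]
    have hn : n₁ = n₂ := by rw [← hdegL, h, hdegR]
    subst hn
    refine ⟨rfl, ?_⟩
    set k := n₁.factorization p with hk
    set m := n₁ / p ^ k with hm
    have hn₁ : n₁ = p ^ k * m := (Nat.ordProj_mul_ordCompl_eq_self n₁ p).symm
    have hpm : ¬ p ∣ m := Nat.not_dvd_ordCompl hp (by omega)
    have hq : 0 < p ^ k := pow_pos hp.pos k
    have hm1 : 1 ≤ m := Nat.one_le_iff_ne_zero.mpr (by
      intro h0; rw [h0, mul_zero] at hn₁; omega)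
    -- show m = 1
    rcases Nat.lt_or_ge m 2 with hm2 | hm2
    · have : m = 1 := by omega
      exact ⟨k, by rw [hn₁, this, mul_one]⟩
    · exfalso
      have hrw : ((Polynomial.X + 1 : Polynomial (ZMod p)) ^ n₁)
          = (Polynomial.X ^ (p ^ k) + 1) ^ m := by
        rw [hn₁, pow_mul, add_pow_char_pow, one_pow]
      have hexp : (Polynomial.X ^ (p ^ k) + 1 : Polynomial (ZMod p)) ^ m
          = Polynomial.expand (ZMod p) (p ^ k) ((Polynomial.X + 1) ^ m) := by
        simp [map_pow, map_add, Polynomial.expand_X]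
      have hco : ((Polynomial.X ^ n₁ + 1 : Polynomial (ZMod p))).coeff (p ^ k)
          = ((Polynomial.X ^ (p ^ k) + 1 : Polynomial (ZMod p)) ^ m).coeff (p ^ k) := by
        rw [h, hrw]
      have hlt : p ^ k < n₁ := by
        rw [hn₁]; nlinarith
      have hL : ((Polynomial.X ^ n₁ + 1 : Polynomial (ZMod p))).coeff (p ^ k) = 0 := by
        rw [Polynomial.coeff_add, Polynomial.coeff_X_pow, Polynomial.coeff_one]
        have h1 : p ^ k ≠ n₁ := hlt.ne
        have h2 : p ^ k ≠ 0 := hq.ne'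
        simp [h1, h2, hp.ne_zero]
      have hR : ((Polynomial.X ^ (p ^ k) + 1 : Polynomial (ZMod p)) ^ m).coeff (p ^ k)
          = (m : ZMod p) := by
        rw [hexp, Polynomial.coeff_expand hq]
        simp [Polynomial.coeff_X_add_one_pow, Nat.div_self hq]
      rw [hL, hR] at hco
      have : (p : ℕ) ∣ m := (ZMod.natCast_eq_zero_iff m p).mp hco.symm
      exact hpm this
  · rintro ⟨rfl, k, rfl⟩
    rw [add_pow_char_pow, one_pow]
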